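/- arXiv:1509.02978 — 2 statements merged into one kernel-verified Lean document; each statement's English description precedes it below -/
import Mathlib

section
/- Let A be a (possibly noncommutative) ring with identity and let N_1, …, N_s be pairwise non-isomorphic left A-modules, each having a local endomorphism ring. Set N = N_1 ⊕ ⋯ ⊕ N_s and E = End_A(N). Then f ∈ E admits a left inverse in E (i.e., there exists g ∈ E with g ∘ f = id_N) if and only if for every j ∈ {1, …, s} the diagonal component π_j ∘ f ∘ ι_j admits a left inverse in End_A(N_j), where ι_j : N_j → N and π_j : N → N_j denote the canonical inclusion and projection of the j-th summand. -/
section Helpers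

variable {R : Type*} [Ring R] [IsLocalRing R]

theorem loc_idem {e : R} (he : e * e = e) : e = 0 ∨ e = 1 := by
  have h1 : e + (1 - e) = 1 := by abel
  rcases IsLocalRing.isUnit_or_isUnit_of_add_one h1 with h | h
  · obtain ⟨w, hw⟩ := h
    right
    calc e = ↑w⁻¹ * (e * e) := by rw [← hw, ← mul_assoc, w.inv_mul, one_mul]
    _ = ↑w⁻¹ * e := by rw [he]
    _ = 1 := by rw [← hw, w.inv_mul]
  · obtain ⟨w, hw⟩ := h
    left
    have h0 : (1 - e) * e = 0 := by rw [sub_mul, one_mul, he, sub_self]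
    calc e = ↑w⁻¹ * ((1 - e) * e) := by rw [← hw, ← mul_assoc, w.inv_mul, one_mul]
    _ = 0 := by rw [h0, mul_zero]

theorem loc_left_inv_isUnit {a b : R} (h : b * a = 1) : IsUnit a := by
  have hi : (a * b) * (a * b) = a * b := by
    rw [mul_assoc a b (a * b), ← mul_assoc b a b, h, one_mul]
  rcases loc_idem hi with h0 | h1
  · have ha : a = 0 := by
      calc a = a * (b * a) := by rw [h, mul_one]
      _ = (a * b) * a := by rw [mul_assoc]
      _ = 0 := by rw [h0, zero_mul]
    rw [ha, mul_zero] at h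
    exact absurd h.symm one_ne_zero
  · exact ⟨⟨a, b, h1, h⟩, rfl⟩

theorem loc_isUnit_add {a b : R} (h : IsUnit (a + b)) : IsUnit a ∨ IsUnit b := by
  obtain ⟨u, hu⟩ := h
  have h1 : ↑u⁻¹ * a + ↑u⁻¹ * b = 1 := by rw [← mul_add, ← hu, u.inv_mul]
  rcases IsLocalRing.isUnit_or_isUnit_of_add_one h1 with h | h
  · left
    have : a = ↑u * (↑u⁻¹ * a) := by rw [← mul_assoc, u.mul_inv, one_mul]
    exact this ▸ u.isUnit.mul h
  · right
    have : b = ↑u * (↑u⁻¹ * b) := by rw [← mul_assoc, u.mul_inv, one_mul]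
    exact this ▸ u.isUnit.mul h

theorem loc_unit_sub {x y : R} (hx : IsUnit x) (hy : ¬ IsUnit y) : IsUnit (x - y) :=
  (loc_isUnit_add (show IsUnit ((x - y) + y) by rwa [sub_add_cancel])).resolve_right hy

theorem loc_sum {ι : Type*} {t : Finset ι} {c : ι → R} (h : IsUnit (∑ i ∈ t, c i)) :
    ∃ i ∈ t, IsUnit (c i) := by
  classical
  induction t using Finset.induction_on with
  | empty => rw [Finset.sum_empty] at h; exact absurd h not_isUnit_zero
  | insert _ _ hx ih =>
    rename_i a t'
    rw [Finset.sum_insert hx] at h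
    rcases loc_isUnit_add h with h | h
    · exact ⟨a, Finset.mem_insert_self a t', h⟩
    · obtain ⟨i, hi, hui⟩ := ih h
      exact ⟨i, Finset.mem_insert_of_mem hi, hui⟩

end Helpers

theorem star_aux {A : Type*} [Ring A] {M P : Type*} [AddCommGroup M] [AddCommGroup P]
    [Module A M] [Module A P] (hM : IsLocalRing (Module.End A M))
    (hP : IsLocalRing (Module.End A P)) (φ : P →ₗ[A] M) (ψ : M →ₗ[A] P)
    (h : IsUnit (ψ ∘ₗ φ : Module.End A P)) : Nonempty (P ≃ₗ[A] M) := by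
  haveI := hM; haveI := hP
  obtain ⟨u, hu⟩ := h
  set v : Module.End A P := ↑u⁻¹ with hv
  have h1 : ∀ x : P, v (ψ (φ x)) = x := by
    intro x
    have h := DFunLike.congr_fun u.inv_mul x
    rw [hu] at h
    simpa using h
  have h2 : ∀ x : P, ψ (φ (v x)) = x := by
    intro x
    have h := DFunLike.congr_fun u.mul_inv x
    rw [hu] at h
    simpa using h
  set e : Module.End A M := φ ∘ₗ (v ∘ₗ ψ) with he
  have hee : e * e = e := by
    apply LinearMap.ext; intro x
    show φ (v (ψ (φ (v (ψ x))))) = φ (v (ψ x))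
    rw [h1]
  rcases loc_idem hee with h0 | hone
  · exfalso
    have hzero : (ψ ∘ₗ φ : Module.End A P) = 0 := by
      apply LinearMap.ext; intro x
      have : ψ (e (φ x)) = ψ (φ x) := by
        show ψ (φ (v (ψ (φ x)))) = ψ (φ x)
        rw [h2]
      rw [h0] at this
      simpa using this.symm
    have : (1 : Module.End A P) = 0 := by
      rw [← u.inv_mul, hu, hzero, mul_zero]
    exact one_ne_zero this
  · refine ⟨LinearEquiv.ofLinear φ (v ∘ₗ ψ) ?_ ?_⟩
    · show e = LinearMap.id
      rw [hone]; rfl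
    · apply LinearMap.ext; intro x
      exact h1 x

universe u v

theorem key {A : Type v} [Ring A] : ∀ (s : ℕ) (N : Fin s → Type u)
    [∀ j, AddCommGroup (N j)] [∀ j, Module A (N j)],
    (∀ j, IsLocalRing (Module.End A (N j))) →
    (∀ i j, i ≠ j → IsEmpty (N i ≃ₗ[A] N j)) →
    ∀ f : Module.End A (∀ j, N j),
    (∀ j, IsUnit ((LinearMap.proj j ∘ₗ (f : (∀ i, N i) →ₗ[A] (∀ i, N i)) ∘ₗ
      LinearMap.single A N j : Module.End A (N j)))) →
    Function.Bijective f := by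
  intro s
  induction s with
  | zero =>
    intro N _ _ _ _ f _
    constructor
    · intro x y _
      funext i; exact i.elim0
    · intro y
      exact ⟨y, funext fun i => i.elim0⟩
  | succ s ih =>
    intro N instG instM hloc hpair f hdiag
    classical
    let F : (∀ i, N i) →ₗ[A] N 0 × (∀ j : Fin s, N j.succ) :=
      LinearMap.prod (LinearMap.proj 0) (LinearMap.pi fun j => LinearMap.proj j.succ)
    let G : (N 0 × (∀ j : Fin s, N j.succ)) →ₗ[A] (∀ i, N i) :=
      LinearMap.pi fun i => Fin.cases (LinearMap.fst A (N 0) _)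
        (fun j => (LinearMap.proj j) ∘ₗ (LinearMap.snd A (N 0) _)) i
    have hF1 : ∀ x, (F x).1 = x 0 := fun x => by
      show (LinearMap.prod (LinearMap.proj 0)
        (LinearMap.pi fun j : Fin s => LinearMap.proj j.succ) x).1 = x 0
      simp
    have hF2 : ∀ x j, (F x).2 j = x j.succ := fun x j => by
      show (LinearMap.prod (LinearMap.proj 0)
        (LinearMap.pi fun j : Fin s => LinearMap.proj j.succ) x).2 j = x j.succ
      simp
    have hGz : ∀ q, G q 0 = q.1 := fun q => by simp [G]
    have hG0 : ∀ q (j : Fin s), G q j.succ = q.2 j := fun q j => by simp [G]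
    have hGF : ∀ x, G (F x) = x := fun x => funext fun i => by
      induction i using Fin.cases with
      | zero => rw [hGz]; exact hF1 x
      | succ j => rw [hG0]; exact hF2 x j
    have hFG : ∀ q, F (G q) = q := fun q =>
      Prod.ext ((hF1 (G q)).trans (hGz q))
        (funext fun j => (hF2 (G q) j).trans (hG0 q j))
    have hGsingle0 : ∀ m : N 0, G (m, 0) = Pi.single 0 m := fun m => funext fun i => by
      induction i using Fin.cases with
      | zero => rw [hGz, Pi.single_eq_same]
      | succ j => rw [hG0, Pi.single_eq_of_ne (Fin.succ_ne_zero j)]; rfl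
    have hGsingle : ∀ (j : Fin s) (x : N j.succ),
        G (0, Pi.single j x) = Pi.single j.succ x := fun j x => funext fun i => by
      induction i using Fin.cases with
      | zero => rw [hGz, Pi.single_eq_of_ne (Fin.succ_ne_zero j).symm]
      | succ k =>
        rw [hG0]
        show (Pi.single j x : ∀ j : Fin s, N j.succ) k = Pi.single j.succ x k.succ
        rcases eq_or_ne k j with rfl | hne
        · rw [Pi.single_eq_same, Pi.single_eq_same]
        · rw [Pi.single_eq_of_ne hne,
            Pi.single_eq_of_ne (fun h => hne (Fin.succ_injective _ h))]
    let f' : Module.End A (N 0 × ∀ j : Fin s, N j.succ) :=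
      F ∘ₗ (f : (∀ i, N i) →ₗ[A] (∀ i, N i)) ∘ₗ G
    let a : Module.End A (N 0) := LinearMap.fst A _ _ ∘ₗ f' ∘ₗ LinearMap.inl A _ _
    let b : (∀ j : Fin s, N j.succ) →ₗ[A] N 0 :=
      LinearMap.fst A (N 0) _ ∘ₗ f' ∘ₗ LinearMap.inr A (N 0) _
    let c : N 0 →ₗ[A] (∀ j : Fin s, N j.succ) :=
      LinearMap.snd A (N 0) _ ∘ₗ f' ∘ₗ LinearMap.inl A (N 0) _
    let d : Module.End A (∀ j : Fin s, N j.succ) :=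
      LinearMap.snd A _ _ ∘ₗ f' ∘ₗ LinearMap.inr A _ _
    have hf' : ∀ m p, f' (m, p) = (a m + b p, c m + d p) := by
      intro m p
      have h1 : ((m, p) : N 0 × ∀ j : Fin s, N j.succ)
          = (m, (0 : ∀ j : Fin s, N j.succ)) + ((0 : N 0), p) := by
        simp
      rw [h1, map_add]
      have h2 : f' (m, (0 : ∀ j : Fin s, N j.succ)) = (a m, c m) := rfl
      have h3 : f' ((0 : N 0), p) = (b p, d p) := rfl
      rw [h2, h3, Prod.mk_add_mk]
    have haeq : a = (LinearMap.proj 0 ∘ₗ (f : (∀ i, N i) →ₗ[A] (∀ i, N i)) ∘ₗ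
        LinearMap.single A N 0 : Module.End A (N 0)) := by
      apply LinearMap.ext; intro m
      show (F (f (G (m, 0)))).1 = f (Pi.single 0 m) 0
      rw [hGsingle0, hF1]
    have ha : IsUnit a := haeq ▸ hdiag 0
    obtain ⟨ua, hua⟩ := ha
    let av : Module.End A (N 0) := ↑ua⁻¹
    have hav1 : ∀ x, av (a x) = x := by
      intro x
      have h := DFunLike.congr_fun ua.inv_mul x
      rw [hua] at h
      simpa using h
    have hav2 : ∀ x, a (av x) = x := by
      intro x
      have h := DFunLike.congr_fun ua.mul_inv x
      rw [hua] at h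
      simpa using h
    let g : Module.End A (∀ j : Fin s, N j.succ) := d - c ∘ₗ (av ∘ₗ b)
    have hdiag' : ∀ j : Fin s,
        IsUnit ((LinearMap.proj j ∘ₗ (g : (∀ j : Fin s, N j.succ) →ₗ[A] ∀ j : Fin s, N j.succ) ∘ₗ
          LinearMap.single A (fun j : Fin s => N j.succ) j : Module.End A (N j.succ))) := by
      intro j
      haveI := hloc j.succ
      have hd : (LinearMap.proj j ∘ₗ (d : (∀ j : Fin s, N j.succ) →ₗ[A] ∀ j : Fin s, N j.succ) ∘ₗ
          LinearMap.single A (fun j : Fin s => N j.succ) j : Module.End A (N j.succ))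
          = (LinearMap.proj j.succ ∘ₗ (f : (∀ i, N i) →ₗ[A] (∀ i, N i)) ∘ₗ
            LinearMap.single A N j.succ : Module.End A (N j.succ)) := by
        apply LinearMap.ext; intro x
        show (F (f (G (0, Pi.single j x)))).2 j = f (Pi.single j.succ x) j.succ
        rw [hGsingle, hF2]
      have hsplit : (LinearMap.proj j ∘ₗ (g : (∀ j : Fin s, N j.succ) →ₗ[A] ∀ j : Fin s, N j.succ) ∘ₗ
          LinearMap.single A (fun j : Fin s => N j.succ) j : Module.End A (N j.succ))
          = (LinearMap.proj j.succ ∘ₗ (f : (∀ i, N i) →ₗ[A] (∀ i, N i)) ∘ₗ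
              LinearMap.single A N j.succ : Module.End A (N j.succ)) -
            ((LinearMap.proj j ∘ₗ c) ∘ₗ
              (av ∘ₗ b ∘ₗ LinearMap.single A (fun j : Fin s => N j.succ) j) :
                Module.End A (N j.succ)) := by
        rw [← hd]
        apply LinearMap.ext; intro x
        show g (Pi.single j x) j = d (Pi.single j x) j - c (av (b (Pi.single j x))) j
        show (d (Pi.single j x) - c (av (b (Pi.single j x)))) j
          = d (Pi.single j x) j - c (av (b (Pi.single j x))) j
        rfl
      rw [hsplit]
      apply loc_unit_sub (hd ▸ hdiag j.succ)
      intro hun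
      obtain ⟨eqv⟩ := star_aux (hloc 0) (hloc j.succ) _ _ hun
      exact (hpair j.succ 0 (Fin.succ_ne_zero j)).false eqv
    have hgbij : Function.Bijective g := ih (fun j => N j.succ) (fun j => hloc j.succ)
      (fun i j hij => hpair i.succ j.succ (fun h => hij (Fin.succ_injective _ h))) g hdiag'
    have habij : Function.Bijective a := Function.bijective_iff_has_inverse.mpr
      ⟨av, hav1, hav2⟩
    let up : (N 0 × ∀ j : Fin s, N j.succ) → (N 0 × ∀ j : Fin s, N j.succ) :=
      fun q => (q.1 + av (b q.2), q.2)
    let dg : (N 0 × ∀ j : Fin s, N j.succ) → (N 0 × ∀ j : Fin s, N j.succ) := Prod.map a g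
    let lo : (N 0 × ∀ j : Fin s, N j.succ) → (N 0 × ∀ j : Fin s, N j.succ) :=
      fun q => (q.1, q.2 + c (av q.1))
    have hupbij : Function.Bijective up := Function.bijective_iff_has_inverse.mpr
      ⟨fun q => (q.1 - av (b q.2), q.2), fun q => by simp [up], fun q => by simp [up]⟩
    have hlobij : Function.Bijective lo := Function.bijective_iff_has_inverse.mpr
      ⟨fun q => (q.1, q.2 - c (av q.1)), fun q => by simp [lo], fun q => by simp [lo]⟩
    have hdgbij : Function.Bijective dg := habij.prodMap hgbij
    have hfact : ∀ q, f' q = lo (dg (up q)) := by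
      rintro ⟨m, p⟩
      rw [hf' m p]
      show (a m + b p, c m + d p) = (a (m + av (b p)), g p + c (av (a (m + av (b p)))))
      have h1 : a (m + av (b p)) = a m + b p := by rw [map_add, hav2]
      have h2 : av (a (m + av (b p))) = m + av (b p) := hav1 _
      have h3 : g p = d p - c (av (b p)) := rfl
      rw [h1, h3, map_add av, hav1, map_add c]
      simp only [Prod.mk.injEq, true_and]
      abel
    have hf'bij : Function.Bijective f' := by
      have hco : ⇑f' = lo ∘ dg ∘ up := funext hfact
      rw [hco]
      exact hlobij.comp (hdgbij.comp hupbij)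
    have hfc : ⇑f = ⇑G ∘ ⇑f' ∘ ⇑F := by
      funext x
      show f x = G (F (f (G (F x))))
      rw [hGF x, hGF (f x)]
    have hFbij : Function.Bijective F := Function.bijective_iff_has_inverse.mpr ⟨G, hGF, hFG⟩
    have hGbij : Function.Bijective G := Function.bijective_iff_has_inverse.mpr ⟨F, hFG, hGF⟩
    rw [hfc]
    exact hGbij.comp (hf'bij.comp hFbij)


/-- With `N = N 1 ⊕ ⋯ ⊕ N s` (the `N j` pairwise non-isomorphic
with local endomorphism rings), an endomorphism `f` of `N` has a left inverse
in `End_A N` iff each diagonal component `π j ∘ f ∘ ι j` has a left inverse in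
`End_A (N j)`. -/
theorem stmt2 {A : Type*} [Ring A] {s : ℕ} (N : Fin s → Type*)
    [∀ j, AddCommGroup (N j)] [∀ j, Module A (N j)]
    (hloc : ∀ j, IsLocalRing (Module.End A (N j)))
    (hpair : ∀ i j, i ≠ j → IsEmpty (N i ≃ₗ[A] N j))
    (f : Module.End A (∀ j, N j)) :
    (∃ g : Module.End A (∀ j, N j), g * f = 1) ↔
      ∀ j, ∃ g : Module.End A (N j),
        g * ((LinearMap.proj j) ∘ₗ
          (f : (∀ i, N i) →ₗ[A] (∀ i, N i)) ∘ₗ (LinearMap.single A N j)) = 1 := by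
  classical
  constructor
  · rintro ⟨g, hg⟩ j
    haveI := hloc j
    have hsum : ∑ i : Fin s,
        ((LinearMap.proj j ∘ₗ (g : (∀ i, N i) →ₗ[A] (∀ i, N i)) ∘ₗ LinearMap.single A N i) ∘ₗ
          (LinearMap.proj i ∘ₗ (f : (∀ i, N i) →ₗ[A] (∀ i, N i)) ∘ₗ LinearMap.single A N j) :
            Module.End A (N j)) = 1 := by
      apply LinearMap.ext; intro x
      have h1 := DFunLike.congr_fun hg (Pi.single j x)
      simp only [Module.End.mul_apply, Module.End.one_apply] at h1
      rw [LinearMap.sum_apply]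
      simp only [LinearMap.comp_apply, LinearMap.proj_apply, LinearMap.single_apply,
        Module.End.one_apply]
      rw [← Finset.sum_apply, ← map_sum, Finset.univ_sum_single, h1, Pi.single_eq_same]
    have hu1 : IsUnit (1 : Module.End A (N j)) := isUnit_one
    rw [← hsum] at hu1
    obtain ⟨i, -, hui⟩ := loc_sum hu1
    rcases eq_or_ne i j with rfl | hij
    · obtain ⟨u, hu⟩ := hui
      refine ⟨↑u⁻¹ * (LinearMap.proj i ∘ₗ (g : (∀ i, N i) →ₗ[A] (∀ i, N i)) ∘ₗ
        LinearMap.single A N i), ?_⟩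
      rw [← Module.End.mul_eq_comp] at hu
      rw [mul_assoc, ← hu]
      exact u.inv_mul
    · exfalso
      obtain ⟨eqv⟩ := star_aux (hloc i) (hloc j)
        (LinearMap.proj i ∘ₗ (f : (∀ i, N i) →ₗ[A] (∀ i, N i)) ∘ₗ LinearMap.single A N j)
        (LinearMap.proj j ∘ₗ (g : (∀ i, N i) →ₗ[A] (∀ i, N i)) ∘ₗ LinearMap.single A N i) hui
      exact (hpair j i (Ne.symm hij)).false eqv
  · intro h
    have hdiag : ∀ j, IsUnit ((LinearMap.proj j ∘ₗ (f : (∀ i, N i) →ₗ[A] (∀ i, N i)) ∘ₗ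
        LinearMap.single A N j : Module.End A (N j))) := by
      intro j
      haveI := hloc j
      obtain ⟨gj, hgj⟩ := h j
      exact loc_left_inv_isUnit hgj
    have hbij := key s N hloc hpair f hdiag
    refine ⟨((LinearEquiv.ofBijective (f : (∀ i, N i) →ₗ[A] (∀ i, N i)) hbij).symm :
      (∀ i, N i) →ₗ[A] (∀ i, N i)), ?_⟩
    apply LinearMap.ext; intro x
    show (LinearEquiv.ofBijective (f : (∀ i, N i) →ₗ[A] (∀ i, N i)) hbij).symm
      ((LinearEquiv.ofBijective (f : (∀ i, N i) →ₗ[A] (∀ i, N i)) hbij) x) = x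
    exact LinearEquiv.symm_apply_apply _ x
end

section
/- Let k be a field, A an associative k-algebra with identity, and N_1, …, N_s pairwise non-isomorphic left A-modules, each having a local endomorphism ring with Jacobson radical 𝔪_j. Suppose that for each j the natural ring homomorphism k → End_A(N_j)/𝔪_j, sending a ∈ k to the class of a·id_{N_j}, is an isomorphism. Set N = N_1 ⊕ ⋯ ⊕ N_s and E = End_A(N). Then the group homomorphism (kˣ)^s → (Eˣ)_ab sending (a_1, …, a_s) to the class of the diagonal automorphism a_1·id_{N_1} ⊕ ⋯ ⊕ a_s·id_{N_s} is a split monomorphism; in particular (kˣ)^s is isomorphic to a direct summand of the abelian group (Eˣ)_ab. -/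
section LocalAux
variable {R : Type*} [Ring R] [IsLocalRing R]

/-- In a local ring, a left-invertible element is a unit. -/
lemma aux_isUnit_of_left_inv {x h : R} (hh : h * x = 1) : IsUnit x := by
  rcases IsLocalRing.isUnit_or_isUnit_of_add_one (a := x * h) (b := 1 - x * h)
      (by abel) with hu | hu
  · obtain ⟨u, hu⟩ := hu
    have hmu : x * h * ↑u⁻¹ = 1 := by rw [← hu]; exact u.mul_inv
    have hxr : x * (h * ↑u⁻¹) = 1 := by rw [← mul_assoc]; exact hmu
    have hrh : h * ↑u⁻¹ = h :=
      calc h * ↑u⁻¹ = (h * x) * (h * ↑u⁻¹) := by rw [hh, one_mul]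
        _ = h * (x * h * ↑u⁻¹) := by rw [mul_assoc, mul_assoc]
        _ = h := by rw [hmu, mul_one]
    rw [hrh] at hxr
    exact ⟨⟨x, h, hxr, hh⟩, rfl⟩
  · exfalso
    have h0 : (1 - x * h) * x = 0 := by
      rw [sub_mul, one_mul, mul_assoc, hh, mul_one, sub_self]
    obtain ⟨u, hu⟩ := hu
    have hx0 : x = 0 := by
      have h2 := congrArg (fun y => (↑u⁻¹ : R) * y) h0
      simpa only [← mul_assoc, ← hu, u.inv_mul, one_mul, mul_zero] using h2
    rw [hx0, mul_zero] at hh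
    exact one_ne_zero hh.symm

/-- The set of nonunits of a local ring as an ideal. -/
def auxMax (R : Type*) [Ring R] [IsLocalRing R] : Ideal R where
  carrier := {x | ¬ IsUnit x}
  zero_mem' := by
    simp only [Set.mem_setOf_eq, isUnit_zero_iff]
    exact zero_ne_one
  add_mem' := by
    intro x y hx hy hxy
    obtain ⟨u, hu⟩ := hxy
    have h1 : (↑u⁻¹ : R) * x + ↑u⁻¹ * y = 1 := by
      rw [← mul_add, ← hu, u.inv_mul]
    rcases IsLocalRing.isUnit_or_isUnit_of_add_one h1 with h | h
    · obtain ⟨v, hv⟩ := h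
      exact hx (aux_isUnit_of_left_inv (h := ↑v⁻¹ * ↑u⁻¹)
        (by rw [mul_assoc, ← hv, v.inv_mul]))
    · obtain ⟨v, hv⟩ := h
      exact hy (aux_isUnit_of_left_inv (h := ↑v⁻¹ * ↑u⁻¹)
        (by rw [mul_assoc, ← hv, v.inv_mul]))
  smul_mem' := by
    intro c x hx hcx
    simp only [smul_eq_mul, Set.mem_setOf_eq] at hcx
    obtain ⟨u, hu⟩ := hcx
    exact hx (aux_isUnit_of_left_inv (h := ↑u⁻¹ * c) (by rw [mul_assoc, ← hu, u.inv_mul]))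

lemma aux_mem_auxMax {x : R} : x ∈ auxMax R ↔ ¬ IsUnit x := Iff.rfl

lemma auxMax_isMaximal : (auxMax R).IsMaximal := by
  constructor
  constructor
  · intro h
    have h1 : (1 : R) ∈ auxMax R := h ▸ Submodule.mem_top
    exact h1 isUnit_one
  · intro I hI
    rw [lt_iff_le_and_ne] at hI
    obtain ⟨hle, hne⟩ := hI
    rw [Ideal.eq_top_iff_one]
    by_contra h1
    apply hne
    apply le_antisymm hle
    intro y hy
    intro hyu
    obtain ⟨u, hu⟩ := hyu
    apply h1
    have hmem : (↑u⁻¹ : R) • y ∈ I := I.smul_mem _ hy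
    simpa [smul_eq_mul, ← hu, u.inv_mul] using hmem

lemma aux_jacobson_bot_eq : Ideal.jacobson (⊥ : Ideal R) = auxMax R := by
  apply le_antisymm
  · exact sInf_le ⟨bot_le, auxMax_isMaximal⟩
  · apply le_sInf
    rintro I ⟨-, hI⟩
    have hle : I ≤ auxMax R := by
      intro y hy hyu
      obtain ⟨u, hu⟩ := hyu
      have hmem : (↑u⁻¹ : R) • y ∈ I := I.smul_mem _ hy
      have h1 : (1 : R) ∈ I := by simpa [smul_eq_mul, ← hu, u.inv_mul] using hmem
      exact hI.ne_top (Ideal.eq_top_iff_one I |>.mpr h1)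
    rcases lt_or_eq_of_le hle with h | h
    · exact absurd (hI.1.2 (auxMax R) h) (auxMax_isMaximal (R := R)).ne_top
    · exact le_of_eq h.symm

lemma aux_mem_jacobson_iff {x : R} :
    x ∈ Ideal.jacobson (⊥ : Ideal R) ↔ ¬ IsUnit x := by
  rw [aux_jacobson_bot_eq]; rfl
end LocalAux

lemma aux_idem_unit {R : Type*} [Monoid R] {q : R} (h : q * q = q) (hq : IsUnit q) : q = 1 := by
  obtain ⟨u, hu⟩ := hq
  have h1 : (↑u⁻¹ : R) * q = 1 := by rw [← hu, u.inv_mul]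
  calc q = 1 * q := (one_mul q).symm
    _ = (↑u⁻¹ * q) * q := by rw [h1]
    _ = ↑u⁻¹ * (q * q) := by rw [mul_assoc]
    _ = ↑u⁻¹ * q := by rw [h]
    _ = 1 := h1

lemma aux_idem_local {R : Type*} [Ring R] [IsLocalRing R] {q : R} (h : q * q = q) :
    q = 0 ∨ q = 1 := by
  rcases IsLocalRing.isUnit_or_isUnit_of_add_one (a := q) (b := 1 - q) (by abel) with hu | hu
  · exact Or.inr (aux_idem_unit h hu)
  · left
    have h2 : (1 - q) * (1 - q) = 1 - q := by
      have : (1 - q) * (1 - q) = 1 - q - q + q * q := by noncomm_ring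
      rw [this, h]; abel
    have := aux_idem_unit h2 hu
    have : q = 0 := by linear_combination (norm := noncomm_ring) -this
    exact this

section Main
variable {k : Type*} [Field k] {A : Type*} [Ring A] [Algebra k A]
    {s : ℕ} {N : Fin s → Type*}
    [∀ j, AddCommGroup (N j)] [∀ j, Module A (N j)]
    [∀ j, Module k (N j)] [∀ j, IsScalarTower k A (N j)] [∀ j, SMulCommClass A k (N j)]

/-- The `(j,j)` diagonal component of an endomorphism of the product. -/
noncomputable def auxd (A : Type*) [Ring A] (N : Fin s → Type*) [∀ j, AddCommGroup (N j)] [∀ j, Module A (N j)]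
    (j : Fin s) (e : Module.End A (∀ i, N i)) : Module.End A (N j) :=
  (LinearMap.proj j) ∘ₗ ((e : (∀ i, N i) →ₗ[A] (∀ i, N i)) ∘ₗ (LinearMap.single A N j))

lemma auxd_apply (j : Fin s) (e : Module.End A (∀ i, N i)) (v : N j) :
    auxd A N j e v = e (Pi.single j v) j := rfl

lemma auxd_one (j : Fin s) : auxd A N j 1 = 1 := by
  ext v
  simp [auxd_apply, Module.End.one_apply]

lemma auxd_mul_eq_sum (j : Fin s) (e f : Module.End A (∀ i, N i)) :
    auxd A N j (e * f) = ∑ i, ((LinearMap.proj j ∘ₗ ((e : (∀ i, N i) →ₗ[A] (∀ i, N i)) ∘ₗ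
      LinearMap.single A N i)) ∘ₗ (LinearMap.proj i ∘ₗ ((f : (∀ i, N i) →ₗ[A] (∀ i, N i)) ∘ₗ
      LinearMap.single A N j)) : Module.End A (N j)) := by
  ext v
  rw [LinearMap.sum_apply]
  simp only [auxd_apply, Module.End.mul_apply, LinearMap.comp_apply, LinearMap.proj_apply,
    LinearMap.single_apply]
  set y := f (Pi.single j v) with hy
  calc (e y) j = (e (∑ i, Pi.single i (y i))) j := by rw [Finset.univ_sum_single]
    _ = (∑ i, e (Pi.single i (y i))) j := by rw [map_sum]
    _ = ∑ i, (e (Pi.single i (y i))) j := Finset.sum_apply _ _ _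

lemma aux_offdiag (hloc : ∀ j, IsLocalRing (Module.End A (N j)))
    (hpair : ∀ i j, i ≠ j → IsEmpty (N i ≃ₗ[A] N j))
    {i j : Fin s} (hij : i ≠ j) (g : N i →ₗ[A] N j) (f : N j →ₗ[A] N i) :
    ¬ IsUnit (g ∘ₗ f : Module.End A (N j)) := by
  haveI := hloc i
  haveI := hloc j
  intro h
  obtain ⟨u, hu⟩ := h
  have hufz : ∀ z : N j, g (f z) = (↑u : Module.End A (N j)) z := by
    intro z
    rw [hu]; rfl
  have huu : ∀ z : N j, (↑u⁻¹ : Module.End A (N j)) (g (f z)) = z := by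
    intro z
    rw [hufz]
    have h2 := DFunLike.congr_fun u.inv_mul z
    rw [Module.End.mul_apply, Module.End.one_apply] at h2
    exact h2
  have hvv : ∀ z : N j, g (f ((↑u⁻¹ : Module.End A (N j)) z)) = z := by
    intro z
    rw [hufz]
    have h2 := DFunLike.congr_fun u.mul_inv z
    rw [Module.End.mul_apply, Module.End.one_apply] at h2
    exact h2
  set p : Module.End A (N i) := (f ∘ₗ (↑u⁻¹ : Module.End A (N j))) ∘ₗ g with hp_def
  have hp_apply : ∀ x : N i, p x = f ((↑u⁻¹ : Module.End A (N j)) (g x)) := fun x => rfl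
  have hp : p * p = p := by
    ext x
    rw [Module.End.mul_apply, hp_apply, hp_apply, huu]
  rcases aux_idem_local hp with h0 | h1
  · -- p = 0 : then u = 0, contradiction
    have hz : ∀ z : N j, (↑u : Module.End A (N j)) z = 0 := by
      intro z
      have e1 : g (p (f z)) = (↑u : Module.End A (N j)) z := by
        rw [hp_apply, hvv, hufz]
      rw [h0] at e1
      simpa using e1.symm
    have hu0 : (↑u : Module.End A (N j)) = 0 := by ext z; exact hz z
    have : (1 : Module.End A (N j)) = 0 := by
      rw [← u.inv_mul, hu0, mul_zero]
    exact one_ne_zero this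
  · -- p = 1 : N j ≃ N i, contradiction
    have hwf : ((↑u⁻¹ : Module.End A (N j)) ∘ₗ g) ∘ₗ f = LinearMap.id := by
      ext z; exact huu z
    have hfw : f ∘ₗ ((↑u⁻¹ : Module.End A (N j)) ∘ₗ g) = LinearMap.id := by
      ext x
      have := congrFun (congrArg (fun (q : Module.End A (N i)) => (q : N i → N i)) h1) x
      simpa [hp_apply] using this
    exact (hpair j i hij.symm).false (LinearEquiv.ofLinear f _ hfw hwf)

end Main

/-- Let `k` be a field, `A` a `k`-algebra, and `N 1, …, N s`
pairwise non-isomorphic `A`-modules with local endomorphism rings such that the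
natural map `k → End_A (N j) / 𝔪 j` is an isomorphism for every `j` (expressed
here by the unique existence of `a : k` with `g - a • id` in the Jacobson
radical, for every endomorphism `g`).  Then the homomorphism
`(kˣ)^s → (End_A (N 1 ⊕ ⋯ ⊕ N s)ˣ)_ab` sending `(a 1, …, a s)` to the class of
the diagonal automorphism `a 1 • id ⊕ ⋯ ⊕ a s • id` is a split monomorphism;
in particular `(kˣ)^s` is a direct summand of the abelianized automorphism
group. -/
theorem stmt5 {k : Type*} [Field k] {A : Type*} [Ring A] [Algebra k A]
    {s : ℕ} (N : Fin s → Type*)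
    [∀ j, AddCommGroup (N j)] [∀ j, Module A (N j)]
    [∀ j, Module k (N j)] [∀ j, IsScalarTower k A (N j)] [∀ j, SMulCommClass A k (N j)]
    (hloc : ∀ j, IsLocalRing (Module.End A (N j)))
    (hpair : ∀ i j, i ≠ j → IsEmpty (N i ≃ₗ[A] N j))
    (hres : ∀ j, ∀ g : Module.End A (N j),
      ∃! a : k, g - a • (1 : Module.End A (N j)) ∈
        Ideal.jacobson (⊥ : Ideal (Module.End A (N j)))) :
    ∃ Φ : (∀ j, kˣ) →* Abelianization (Module.End A (∀ j, N j))ˣ,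
      (∀ a : ∀ j, kˣ, ∃ e : (Module.End A (∀ j, N j))ˣ,
        (e : Module.End A (∀ j, N j)) =
          LinearMap.pi (fun j => (a j : k) • (LinearMap.proj j : (∀ i, N i) →ₗ[A] N j))) ∧
      (∀ (a : ∀ j, kˣ) (e : (Module.End A (∀ j, N j))ˣ),
        (e : Module.End A (∀ j, N j)) =
          LinearMap.pi (fun j => (a j : k) • (LinearMap.proj j : (∀ i, N i) →ₗ[A] N j)) →
        Φ a = Abelianization.of e) ∧
      Function.Injective Φ ∧
      ∃ ρ : Abelianization (Module.End A (∀ j, N j))ˣ →* (∀ j, kˣ),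
        ρ.comp Φ = MonoidHom.id (∀ j, kˣ) := by

  classical
  -- the residue map
  set r : ∀ j, Module.End A (N j) → k := fun j g => (hres j g).choose with hr_def
  have hr_spec : ∀ j (g : Module.End A (N j)),
      g - r j g • 1 ∈ Ideal.jacobson (⊥ : Ideal (Module.End A (N j))) :=
    fun j g => (hres j g).choose_spec.1
  have hr_uniq : ∀ j (g : Module.End A (N j)) (a : k),
      g - a • 1 ∈ Ideal.jacobson (⊥ : Ideal (Module.End A (N j))) → r j g = a :=
    fun j g a ha => ((hres j g).choose_spec.2 a ha).symm
  have hr_smul : ∀ j (a : k), r j (a • 1) = a := fun j a =>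
    hr_uniq j _ a (by simpa using (Ideal.jacobson (⊥ : Ideal (Module.End A (N j)))).zero_mem)
  -- multiplicativity of the residue of the diagonal component
  have hmul : ∀ j (e f : Module.End A (∀ i, N i)),
      r j (auxd A N j (e * f)) = r j (auxd A N j e) * r j (auxd A N j f) := by
    intro j e f
    haveI := hloc j
    set g := auxd A N j e with hg_def
    set h := auxd A N j f with hh_def
    set a := r j g with ha_def
    set b := r j h with hb_def
    set J := Ideal.jacobson (⊥ : Ideal (Module.End A (N j))) with hJ_def
    set c : Fin s → Module.End A (N j) := fun i =>
      ((LinearMap.proj j ∘ₗ ((e : (∀ i, N i) →ₗ[A] (∀ i, N i)) ∘ₗ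
      LinearMap.single A N i)) ∘ₗ (LinearMap.proj i ∘ₗ ((f : (∀ i, N i) →ₗ[A] (∀ i, N i)) ∘ₗ
      LinearMap.single A N j))) with hc_def
    have hcj : c j = g * h := by
      ext v
      simp [hc_def, hg_def, hh_def, Module.End.mul_apply, auxd_apply, auxd]
    -- h1 : the diagonal term
    have hgmem : g - a • 1 ∈ J := hr_spec j g
    have hhmem : h - b • 1 ∈ J := hr_spec j h
    have e1 : g * (h - b • 1) ∈ J := by
      simpa [smul_eq_mul] using J.smul_mem g hhmem
    have e2 : (b • (1 : Module.End A (N j))) * (g - a • 1) ∈ J := by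
      simpa [smul_eq_mul] using J.smul_mem (b • (1 : Module.End A (N j))) hgmem
    have hid : g * h - (a * b) • (1 : Module.End A (N j)) =
        g * (h - b • 1) + (b • (1 : Module.End A (N j))) * (g - a • 1) := by
      have i1 : g * (h - b • 1) = g * h - b • g := by
        rw [mul_sub, mul_smul_comm, mul_one]
      have i2 : (b • (1 : Module.End A (N j))) * (g - a • 1) = b • g - (a * b) • 1 := by
        rw [smul_mul_assoc, one_mul, smul_sub, smul_smul, mul_comm b a]
      rw [i1, i2]
      abel
    have h1 : g * h - (a * b) • (1 : Module.End A (N j)) ∈ J := by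
      rw [hid]; exact J.add_mem e1 e2
    -- off-diagonal terms
    have h2 : ∀ i ∈ Finset.univ.erase j, c i ∈ J := by
      intro i hi
      have hij : i ≠ j := (Finset.mem_erase.1 hi).1
      rw [hJ_def, aux_mem_jacobson_iff]
      exact aux_offdiag hloc hpair hij _ _
    have h3 : ∑ i ∈ Finset.univ.erase j, c i ∈ J := Ideal.sum_mem _ h2
    have h4 : auxd A N j (e * f) = g * h + ∑ i ∈ Finset.univ.erase j, c i := by
      rw [auxd_mul_eq_sum, ← hcj, Finset.add_sum_erase _ c (Finset.mem_univ j)]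
    have key : auxd A N j (e * f) - (a * b) • (1 : Module.End A (N j)) ∈ J := by
      have h5 : auxd A N j (e * f) - (a * b) • (1 : Module.End A (N j)) =
          (g * h - (a * b) • (1 : Module.End A (N j))) + ∑ i ∈ Finset.univ.erase j, c i := by
        rw [h4]; abel
      rw [h5]
      exact J.add_mem h1 h3
    exact hr_uniq j _ _ key
  have hone : ∀ j, r j (auxd A N j 1) = 1 := by
    intro j
    rw [auxd_one, show (1 : Module.End A (N j)) = (1 : k) • 1 by rw [one_smul], hr_smul]
  -- the residue monoid homs
  set φ : ∀ j, Module.End A (∀ i, N i) →* k := fun j =>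
    { toFun := fun e => r j (auxd A N j e)
      map_one' := hone j
      map_mul' := hmul j } with hφ_def
  set ρ0 : (Module.End A (∀ i, N i))ˣ →* (∀ j, kˣ) :=
    Pi.monoidHom (fun j => Units.map (φ j)) with hρ0_def
  set ρ : Abelianization (Module.End A (∀ j, N j))ˣ →* (∀ j, kˣ) :=
    Abelianization.lift ρ0 with hρ_def
  -- the diagonal automorphisms
  set D : (∀ j, kˣ) → Module.End A (∀ i, N i) := fun a =>
    LinearMap.pi (fun j => (a j : k) • (LinearMap.proj j : (∀ i, N i) →ₗ[A] N j)) with hD_def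
  have hD_apply : ∀ a x j, D a x j = (a j : k) • x j := by
    intro a x j
    simp [hD_def, LinearMap.pi_apply]
  have hD_mul : ∀ a b, D a * D b = D (a * b) := by
    intro a b
    apply LinearMap.ext
    intro x
    funext j
    rw [Module.End.mul_apply, hD_apply, hD_apply, hD_apply, smul_smul]
    rfl
  have hD_one : D 1 = 1 := by
    apply LinearMap.ext
    intro x
    funext j
    rw [hD_apply]
    simp
  set Dm : (∀ j, kˣ) →* (Module.End A (∀ j, N j))ˣ :=
    { toFun := fun a => ⟨D a, D a⁻¹,
        by rw [hD_mul, mul_inv_cancel, hD_one],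
        by rw [hD_mul, inv_mul_cancel, hD_one]⟩
      map_one' := Units.ext (by simpa using hD_one)
      map_mul' := fun a b => Units.ext (by simpa using (hD_mul a b).symm) } with hDm_def
  set Φ : (∀ j, kˣ) →* Abelianization (Module.End A (∀ j, N j))ˣ :=
    (Abelianization.of).comp Dm with hΦ_def
  -- diagonal component of D a
  have hdD : ∀ (a : ∀ j, kˣ) j, auxd A N j (D a) = (a j : k) • 1 := by
    intro a j
    ext v
    rw [auxd_apply, hD_apply]
    simp
  have hretr : ρ.comp Φ = MonoidHom.id (∀ j, kˣ) := by
    apply MonoidHom.ext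
    intro a
    show ρ (Abelianization.of (Dm a)) = a
    rw [hρ_def, Abelianization.lift_apply_of]
    funext j
    apply Units.ext
    show φ j (D a) = (a j : k)
    rw [hφ_def]
    show r j (auxd A N j (D a)) = (a j : k)
    rw [hdD, hr_smul]
  refine ⟨Φ, ?_, ?_, ?_, ρ, hretr⟩
  · intro a
    exact ⟨Dm a, rfl⟩
  · intro a e he
    have : e = Dm a := Units.ext (by rw [he]; rfl)
    rw [this]
    rfl
  · have hli : Function.LeftInverse ρ Φ := fun a => by
      have := DFunLike.congr_fun hretr a
      simpa using this
    exact hli.injective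
end
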